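/- Let m_1,…,m_{s-d} ∈ Z^s and let ℓ_1,…,ℓ_d be homogeneous linear forms on R^s with coefficient matrix W ∈ R^{d×s}. Define B(x) as the determinant of the s×s matrix with first s−d rows equal to Exp^t (rows m_1^t,…,m_{s-d}^t) and last d rows equal to Wx (with (Wx)_{ij}=W_{ij}x_j). Then there exist two distinct points x, y ∈ R^s_{>0} satisfying x^{m_i} = y^{m_i} for all i = 1,…,s−d and ℓ_j(x) = ℓ_j(y) for all j = 1,…,d, if and only if either B is the zero polynomial or B has two coefficients of opposite signs. -/

import Mathlib

open MvPolynomial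

/-- The critical polynomial B(x). -/
noncomputable def Bpoly {s d : ℕ} (hd : d ≤ s)
    (Exp : Matrix (Fin s) (Fin (s - d)) ℤ) (W : Matrix (Fin d) (Fin s) ℝ) :
    MvPolynomial (Fin s) ℝ :=
  ((Matrix.fromRows
      (Matrix.of fun i j => (C ((Exp j i : ℤ) : ℝ) : MvPolynomial (Fin s) ℝ))
      (Matrix.of fun i j => C (W i j) * X j)).submatrix
    (finSumFinEquiv.trans (finCongr (Nat.sub_add_cancel hd))).symm id).det

/-- The real matrix whose determinant is the evaluation of `Bpoly`. -/
noncomputable def Mmat {s d : ℕ} (hd : d ≤ s)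
    (Exp : Matrix (Fin s) (Fin (s - d)) ℤ) (W : Matrix (Fin d) (Fin s) ℝ)
    (x : Fin s → ℝ) : Matrix (Fin s) (Fin s) ℝ :=
  ((Matrix.fromRows
      (Matrix.of fun i j => ((Exp j i : ℤ) : ℝ))
      (Matrix.of fun i j => W i j * x j)).submatrix
    (finSumFinEquiv.trans (finCongr (Nat.sub_add_cancel hd))).symm id)

lemma eval_Bpoly {s d : ℕ} (hd : d ≤ s)
    (Exp : Matrix (Fin s) (Fin (s - d)) ℤ) (W : Matrix (Fin d) (Fin s) ℝ)
    (x : Fin s → ℝ) :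
    eval x (Bpoly hd Exp W) = (Mmat hd Exp W x).det := by
  unfold Bpoly Mmat
  rw [RingHom.map_det]
  congr 1
  ext r c
  rcases h : (finSumFinEquiv.trans (finCongr (Nat.sub_add_cancel hd))).symm r with i | i <;>
    simp only [RingHom.mapMatrix_apply, Matrix.map_apply, Matrix.submatrix_apply, h] <;>
    simp [Matrix.fromRows_apply_inl, Matrix.fromRows_apply_inr]

lemma prod_support_le {s : ℕ} (f : Fin s → MvPolynomial (Fin s) ℝ) (F : Finset (Fin s))
    (hf : ∀ i, ∀ e ∈ (f i).support, ∀ j, e j ≤ if j = i then 1 else 0) :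
    ∀ e ∈ (∏ i ∈ F, f i).support, ∀ j, e j ≤ if j ∈ F then 1 else 0 := by
  classical
  induction F using Finset.induction_on with
  | empty =>
    intro e he j
    simp only [Finset.prod_empty, MvPolynomial.mem_support_iff, MvPolynomial.coeff_one,
      ne_eq, ite_eq_right_iff, not_forall] at he
    obtain ⟨h0, -⟩ := he
    simp [← h0]
  | @insert a F ha ih =>
    intro e he j
    rw [Finset.prod_insert ha] at he
    have := MvPolynomial.support_mul _ _ he
    rw [Finset.mem_add] at this
    obtain ⟨e1, he1, e2, he2, rfl⟩ := this
    have h1 := hf a e1 he1 j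
    have h2 := ih e2 he2 j
    by_cases hja : j = a
    · subst hja
      simp at h1
      simp [ha] at h2
      simp only [Finsupp.add_apply, Finset.mem_insert_self, if_true]
      omega
    · simp only [if_neg hja] at h1
      simp only [Finset.mem_insert, hja, false_or]
      simp only [Finsupp.add_apply]
      split <;> rename_i hjF <;> simp [hjF] at h2 <;> omega

lemma Bpoly_support {s d : ℕ} (hd : d ≤ s)
    (Exp : Matrix (Fin s) (Fin (s - d)) ℤ) (W : Matrix (Fin d) (Fin s) ℝ) :
    ∀ e ∈ (Bpoly hd Exp W).support, ∀ j, e j ≤ 1 := by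
  classical
  intro e he j
  unfold Bpoly at he
  rw [Matrix.det_apply] at he
  obtain ⟨σ, -, hσ⟩ := Finset.mem_biUnion.mp (MvPolynomial.support_sum he)
  have hσ' := MvPolynomial.support_smul hσ
  have key := prod_support_le
    (fun i => ((Matrix.fromRows
      (Matrix.of fun i j => (C ((Exp j i : ℤ) : ℝ) : MvPolynomial (Fin s) ℝ))
      (Matrix.of fun i j => C (W i j) * X j)).submatrix
      (finSumFinEquiv.trans (finCongr (Nat.sub_add_cancel hd))).symm id) (σ i) i)
    Finset.univ ?_ e hσ' j
  · simpa using key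
  · intro i e' he' j'
    rcases h : (finSumFinEquiv.trans (finCongr (Nat.sub_add_cancel hd))).symm (σ i) with k | k <;>
      simp only [Matrix.submatrix_apply, h, Matrix.fromRows_apply_inl, Matrix.fromRows_apply_inr,
        Matrix.of_apply, Sum.elim_inl,
        Sum.elim_inr, id] at he'
    · rw [MvPolynomial.mem_support_iff, MvPolynomial.coeff_C] at he'
      have : e' = 0 := by by_contra hc; exact he' (if_neg (fun hh => hc hh.symm))
      simp [this]
    · rw [MvPolynomial.C_mul_X_eq_monomial, MvPolynomial.support_monomial] at he'
      split at he' <;> simp only [Finset.mem_singleton, Finset.notMem_empty] at he'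
      subst he'
      rw [Finsupp.single_apply]
      split <;> rename_i hh <;> simp [hh]

lemma zpow_finset_sum {t : ℝ} (ht : t ≠ 0) {α : Type*} (F : Finset α) (f : α → ℤ) :
    t ^ (∑ j ∈ F, f j) = ∏ j ∈ F, t ^ f j := by
  classical
  induction F using Finset.induction_on with
  | empty => simp
  | @insert a F ha ih => rw [Finset.sum_insert ha, Finset.prod_insert ha, zpow_add₀ ht, ih]

lemma exists_pos_eval_pos {s : ℕ} (p : MvPolynomial (Fin s) ℝ)
    (hml : ∀ e ∈ p.support, ∀ j, e j ≤ 1)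
    {d1 : Fin s →₀ ℕ} (hc : 0 < p.coeff d1) :
    ∃ x : Fin s → ℝ, (∀ j, 0 < x j) ∧ 0 < eval x p := by
  classical
  set u : Fin s → ℤ := fun j => if d1 j = 1 then 1 else -1 with hu
  set E : (Fin s →₀ ℕ) → ℤ := fun e => ∑ j, u j * e j with hE
  set k : ℤ := ∑ j, (d1 j : ℤ) with hk
  have hd1mem : d1 ∈ p.support := MvPolynomial.mem_support_iff.mpr (ne_of_gt hc)
  have hd1le : ∀ j, d1 j ≤ 1 := hml d1 hd1mem
  have hEd1 : E d1 = k := by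
    refine Finset.sum_congr rfl fun j _ => ?_
    have := hd1le j
    interval_cases h : d1 j <;> simp [hu, h]
  have hkey : ∀ e ∈ p.support, e ≠ d1 → E e ≤ k - 1 := by
    intro e he hne
    have hele : ∀ j, e j ≤ 1 := hml e he
    have hlt : E e < k := by
      have hle : ∀ j ∈ Finset.univ, u j * e j ≤ (d1 j : ℤ) := by
        intro j _
        have h1 := hd1le j; have h2 := hele j
        by_cases h : d1 j = 1 <;> simp [hu, h] <;> omega
      have hex : ∃ j ∈ Finset.univ, u j * e j < (d1 j : ℤ) := by
        by_contra hno
        push_neg at hno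
        apply hne
        ext j
        have h1 := hd1le j; have h2 := hele j
        have h3 := hno j (Finset.mem_univ j)
        have h4 := hle j (Finset.mem_univ j)
        by_cases h : d1 j = 1 <;> simp [hu, h] at h3 h4 ⊢ <;> omega
      exact Finset.sum_lt_sum hle hex
    omega
  set S : ℝ := ∑ e ∈ p.support, |p.coeff e| with hS
  have hS0 : 0 ≤ S := Finset.sum_nonneg fun e _ => abs_nonneg _
  set t : ℝ := max 2 ((S + 1) / p.coeff d1) with ht
  have ht1 : (1:ℝ) < t := lt_of_lt_of_le one_lt_two (le_max_left _ _)
  have ht0 : (0:ℝ) < t := lt_trans one_pos ht1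
  refine ⟨fun j => t ^ (u j), fun j => zpow_pos ht0 _, ?_⟩
  have hmono : ∀ e : Fin s →₀ ℕ, (∏ j, (t ^ (u j)) ^ (e j)) = t ^ (E e) := by
    intro e
    rw [hE]
    rw [zpow_finset_sum (ne_of_gt ht0)]
    refine Finset.prod_congr rfl fun j _ => ?_
    rw [← zpow_natCast (t ^ (u j)) (e j), ← zpow_mul]
  rw [MvPolynomial.eval_eq']
  have hcongr : ∀ e ∈ p.support, p.coeff e * ∏ j, (t ^ (u j)) ^ (e j) = p.coeff e * t ^ (E e) :=
    fun e _ => by rw [hmono]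
  rw [Finset.sum_congr rfl hcongr, ← Finset.add_sum_erase _ _ hd1mem]
  have htk1 : (0:ℝ) < t ^ (k-1) := zpow_pos ht0 _
  have hrest : |∑ e ∈ p.support.erase d1, p.coeff e * t ^ (E e)| ≤ S * t ^ (k-1) := by
    calc |∑ e ∈ p.support.erase d1, p.coeff e * t ^ (E e)|
        ≤ ∑ e ∈ p.support.erase d1, |p.coeff e * t ^ (E e)| :=
          Finset.abs_sum_le_sum_abs _ _
      _ ≤ ∑ e ∈ p.support.erase d1, |p.coeff e| * t ^ (k-1) := by
          refine Finset.sum_le_sum fun e he => ?_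
          rw [abs_mul, abs_of_pos (zpow_pos ht0 _)]
          exact mul_le_mul_of_nonneg_left
            (zpow_le_zpow_right₀ ht1.le
              (hkey e (Finset.mem_of_mem_erase he) (Finset.ne_of_mem_erase he)))
            (abs_nonneg _)
      _ = (∑ e ∈ p.support.erase d1, |p.coeff e|) * t ^ (k-1) := by
          rw [Finset.sum_mul]
      _ ≤ S * t ^ (k-1) := by
          refine mul_le_mul_of_nonneg_right ?_ htk1.le
          exact Finset.sum_le_sum_of_subset_of_nonneg (Finset.erase_subset _ _)
            (fun e _ _ => abs_nonneg _)
  have htk : t ^ k = t ^ (k-1) * t := by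
    rw [← zpow_add_one₀ (ne_of_gt ht0), sub_add_cancel]
  have hct : S < p.coeff d1 * t := by
    have h2 : (S + 1) / p.coeff d1 ≤ t := le_max_right _ _
    rw [div_le_iff₀ hc] at h2
    nlinarith
  have hprod : 0 < t ^ (k-1) * (p.coeff d1 * t - S) :=
    mul_pos htk1 (sub_pos.mpr hct)
  have hneg := neg_abs_le (∑ e ∈ p.support.erase d1, p.coeff e * t ^ (E e))
  rw [hEd1, htk]
  nlinarith

lemma eval_pos_of_nonneg {s : ℕ} (p : MvPolynomial (Fin s) ℝ) (hne : p ≠ 0)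
    (hnn : ∀ e, 0 ≤ p.coeff e) (x : Fin s → ℝ) (hx : ∀ j, 0 < x j) :
    0 < eval x p := by
  rw [MvPolynomial.eval_eq']
  obtain ⟨e0, he0⟩ := (MvPolynomial.ne_zero_iff.mp hne)
  refine Finset.sum_pos' (fun e _ => mul_nonneg (hnn e)
    (Finset.prod_nonneg fun j _ => pow_nonneg (hx j).le _)) ?_
  refine ⟨e0, MvPolynomial.mem_support_iff.mpr he0, ?_⟩
  exact mul_pos (lt_of_le_of_ne (hnn e0) (Ne.symm he0))
    (Finset.prod_pos fun j _ => pow_pos (hx j) _)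

lemma ivt_pos_orthant {s : ℕ} (p : MvPolynomial (Fin s) ℝ) (x y : Fin s → ℝ)
    (hx : ∀ j, 0 < x j) (hy : ∀ j, 0 < y j)
    (hfx : eval x p < 0) (hfy : 0 < eval y p) :
    ∃ z : Fin s → ℝ, (∀ j, 0 < z j) ∧ eval z p = 0 := by
  set f : ℝ → ℝ := fun c => eval (fun j => (1 - c) * x j + c * y j) p with hf
  have hcont : Continuous f := by
    exact (MvPolynomial.continuous_eval p).comp
      (continuous_pi fun j => by continuity)
  have h0 : f 0 = eval x p := by simp [hf]
  have h1 : f 1 = eval y p := by simp [hf]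
  have : (0:ℝ) ∈ Set.Icc (f 0) (f 1) := by
    rw [h0, h1]; exact ⟨hfx.le, hfy.le⟩
  obtain ⟨c, hc, hfc⟩ := intermediate_value_Icc (by norm_num : (0:ℝ) ≤ 1)
    hcont.continuousOn this
  refine ⟨fun j => (1 - c) * x j + c * y j, fun j => ?_, hfc⟩
  rcases eq_or_lt_of_le hc.1 with h | h
  · simp [← h, hx j]
  · have h2 : 0 ≤ 1 - c := by linarith [hc.2]
    have h3 := mul_nonneg h2 (hx j).le
    have h4 : 0 < c * y j := mul_pos h (hy j)
    show 0 < (1 - c) * x j + c * y j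
    linarith

lemma zero_point_iff {s d : ℕ} (hd : d ≤ s)
    (Exp : Matrix (Fin s) (Fin (s - d)) ℤ) (W : Matrix (Fin d) (Fin s) ℝ) :
    (∃ x : Fin s → ℝ, (∀ j, 0 < x j) ∧ eval x (Bpoly hd Exp W) = 0) ↔
    (Bpoly hd Exp W = 0 ∨
      ∃ d1 d2 : Fin s →₀ ℕ,
        0 < (Bpoly hd Exp W).coeff d1 ∧ (Bpoly hd Exp W).coeff d2 < 0) := by
  set p := Bpoly hd Exp W with hp
  constructor
  · rintro ⟨x, hx, hx0⟩
    by_contra hcon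
    push_neg at hcon
    obtain ⟨hne, hmix⟩ := hcon
    by_cases hpos : ∃ e, 0 < p.coeff e
    · obtain ⟨e, he⟩ := hpos
      have hnn : ∀ e', 0 ≤ p.coeff e' := fun e' => hmix e e' he
      exact absurd hx0 (ne_of_gt (eval_pos_of_nonneg _ hne hnn x hx))
    · push_neg at hpos
      have hnn : ∀ e', 0 ≤ (-p).coeff e' := fun e' => by
        rw [MvPolynomial.coeff_neg]; linarith [hpos e']
      have := eval_pos_of_nonneg (-p) (neg_ne_zero.mpr hne) hnn x hx
      rw [map_neg] at this
      linarith
  · rintro (h | ⟨d1, d2, h1, h2⟩)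
    · exact ⟨fun _ => 1, fun _ => one_pos, by simp [h]⟩
    · have hml := Bpoly_support hd Exp W
      obtain ⟨x1, hx1, he1⟩ := exists_pos_eval_pos _ hml h1
      have hml' : ∀ e ∈ (-p).support, ∀ j, e j ≤ 1 := by
        simpa [MvPolynomial.support_neg] using hml
      have h2' : 0 < (-p).coeff d2 := by
        rw [MvPolynomial.coeff_neg]; linarith
      obtain ⟨x2, hx2, he2⟩ := exists_pos_eval_pos _ hml' h2'
      rw [map_neg] at he2
      exact ivt_pos_orthant _ x2 x1 hx2 hx1 (by linarith) he1

lemma exp_zpow (r : ℝ) (n : ℤ) : Real.exp r ^ n = Real.exp (n * r) := by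
  rcases n with n | n
  · rw [Int.ofNat_eq_coe, zpow_natCast, ← Real.exp_nat_mul]
    norm_num
  · rw [zpow_negSucc, ← Real.exp_nat_mul, ← Real.exp_neg]
    congr 1
    push_cast
    ring

lemma Mmat_mulVec_eq_zero_iff {s d : ℕ} (hd : d ≤ s)
    (Exp : Matrix (Fin s) (Fin (s - d)) ℤ) (W : Matrix (Fin d) (Fin s) ℝ)
    (z v : Fin s → ℝ) :
    (Mmat hd Exp W z).mulVec v = 0 ↔
    ((∀ i : Fin (s - d), ∑ j, (Exp j i : ℝ) * v j = 0) ∧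
     (∀ a : Fin d, ∑ j, W a j * z j * v j = 0)) := by
  set e := finSumFinEquiv.trans (finCongr (Nat.sub_add_cancel hd)) with he
  have hrow : ∀ r, (Mmat hd Exp W z).mulVec v r =
      Sum.elim (fun i => ∑ j, (Exp j i : ℝ) * v j)
        (fun a => ∑ j, W a j * z j * v j) (e.symm r) := by
    intro r
    rcases hr : e.symm r with i | i <;>
      simp [Mmat, Matrix.mulVec, dotProduct, Matrix.submatrix_apply, ← he, hr,
        Matrix.fromRows_apply_inl, Matrix.fromRows_apply_inr, mul_assoc]
  constructor
  · intro h
    constructor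
    · intro i
      have := congrFun h (e (Sum.inl i))
      rw [hrow] at this
      simpa using this
    · intro a
      have := congrFun h (e (Sum.inr a))
      rw [hrow] at this
      simpa using this
  · rintro ⟨h1, h2⟩
    funext r
    rw [hrow, Pi.zero_apply]
    rcases e.symm r with i | i
    · exact h1 i
    · exact h2 i

lemma lhs_of_zero_point {s d : ℕ} (hd : d ≤ s)
    (Exp : Matrix (Fin s) (Fin (s - d)) ℤ) (W : Matrix (Fin d) (Fin s) ℝ)
    (h : ∃ z : Fin s → ℝ, (∀ j, 0 < z j) ∧ eval z (Bpoly hd Exp W) = 0) :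
    ∃ x y : Fin s → ℝ, (∀ j, 0 < x j) ∧ (∀ j, 0 < y j) ∧ x ≠ y ∧
      (∀ i : Fin (s - d), (∏ j, x j ^ Exp j i) = ∏ j, y j ^ Exp j i) ∧
      (∀ a : Fin d, (∑ j, W a j * x j) = ∑ j, W a j * y j) := by
  obtain ⟨z, hz, hz0⟩ := h
  rw [eval_Bpoly] at hz0
  obtain ⟨v, hv, hMv⟩ := (Matrix.exists_mulVec_eq_zero_iff).mpr hz0
  rw [Mmat_mulVec_eq_zero_iff] at hMv
  obtain ⟨htop, hbot⟩ := hMv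
  set y : Fin s → ℝ := fun j => if v j = 0 then 1 else z j * v j / (Real.exp (v j) - 1)
    with hy
  set x : Fin s → ℝ := fun j => y j * Real.exp (v j) with hx
  have hexpne : ∀ j, v j ≠ 0 → Real.exp (v j) ≠ 1 := by
    intro j h hc
    rw [← Real.exp_zero, Real.exp_eq_exp] at hc
    exact h hc
  have hypos : ∀ j, 0 < y j := by
    intro j
    by_cases h : v j = 0
    · simp [hy, h]
    · simp only [hy, if_neg h]
      rcases lt_or_gt_of_ne h with hneg | hpos2
      · have h1 : Real.exp (v j) - 1 < 0 := by
          have := Real.exp_lt_one_iff.mpr hneg; linarith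
        exact div_pos_of_neg_of_neg (by nlinarith [hz j]) h1
      · have h1 : 0 < Real.exp (v j) - 1 := by
          have := Real.one_lt_exp_iff.mpr hpos2; linarith
        exact div_pos (mul_pos (hz j) hpos2) h1
  have hxpos : ∀ j, 0 < x j := fun j => mul_pos (hypos j) (Real.exp_pos _)
  have hdiff : ∀ j, x j - y j = z j * v j := by
    intro j
    by_cases h : v j = 0
    · simp [hx, hy, h]
    · have hne : Real.exp (v j) - 1 ≠ 0 := sub_ne_zero.mpr (hexpne j h)
      simp only [hx, hy, if_neg h]
      field_simp
  refine ⟨x, y, hxpos, hypos, ?_, ?_, ?_⟩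
  · obtain ⟨j, hj⟩ := Function.ne_iff.mp hv
    intro hc
    apply hexpne j hj
    have h2 : y j * Real.exp (v j) = y j := congrFun hc j
    nth_rewrite 2 [← mul_one (y j)] at h2
    exact mul_left_cancel₀ (ne_of_gt (hypos j)) h2
  · intro i
    have hprod : ∀ j : Fin s, x j ^ Exp j i = y j ^ Exp j i * Real.exp ((Exp j i : ℝ) * v j) := by
      intro j
      rw [hx, mul_zpow, exp_zpow]
    calc (∏ j, x j ^ Exp j i)
        = (∏ j, y j ^ Exp j i) * ∏ j, Real.exp ((Exp j i : ℝ) * v j) := by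
          rw [← Finset.prod_mul_distrib]
          exact Finset.prod_congr rfl fun j _ => hprod j
      _ = (∏ j, y j ^ Exp j i) * Real.exp (∑ j, (Exp j i : ℝ) * v j) := by
          rw [Real.exp_sum]
      _ = ∏ j, y j ^ Exp j i := by rw [htop i, Real.exp_zero, mul_one]
  · intro a
    have : ∑ j, (W a j * x j - W a j * y j) = 0 := by
      calc ∑ j, (W a j * x j - W a j * y j)
          = ∑ j, W a j * z j * v j := by
            refine Finset.sum_congr rfl fun j _ => ?_
            rw [← mul_sub, hdiff j, mul_assoc]
        _ = 0 := hbot a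
    rw [Finset.sum_sub_distrib] at this
    linarith

lemma zero_point_of_lhs {s d : ℕ} (hd : d ≤ s)
    (Exp : Matrix (Fin s) (Fin (s - d)) ℤ) (W : Matrix (Fin d) (Fin s) ℝ)
    (h : ∃ x y : Fin s → ℝ, (∀ j, 0 < x j) ∧ (∀ j, 0 < y j) ∧ x ≠ y ∧
      (∀ i : Fin (s - d), (∏ j, x j ^ Exp j i) = ∏ j, y j ^ Exp j i) ∧
      (∀ a : Fin d, (∑ j, W a j * x j) = ∑ j, W a j * y j)) :
    ∃ z : Fin s → ℝ, (∀ j, 0 < z j) ∧ eval z (Bpoly hd Exp W) = 0 := by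
  obtain ⟨x, y, hx, hy, hxy, hmon, hlin⟩ := h
  set v : Fin s → ℝ := fun j => Real.log (x j) - Real.log (y j) with hvdef
  set z : Fin s → ℝ := fun j => if v j = 0 then 1 else (x j - y j) / v j with hzdef
  have hxyj : ∀ j, v j = 0 → x j = y j := by
    intro j hj
    have : Real.log (x j) = Real.log (y j) := by
      have : v j = Real.log (x j) - Real.log (y j) := rfl
      linarith [this ▸ hj]
    exact Real.log_injOn_pos (Set.mem_Ioi.mpr (hx j)) (Set.mem_Ioi.mpr (hy j)) this
  have hzpos : ∀ j, 0 < z j := by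
    intro j
    by_cases hj : v j = 0
    · simp [hzdef, hj]
    · simp only [hzdef, if_neg hj]
      rcases lt_trichotomy (x j) (y j) with hlt | heq | hgt
      · have hvneg : v j < 0 := by
          have := (Real.log_lt_log_iff (hx j) (hy j)).mpr hlt
          simp only [hvdef]; linarith
        exact div_pos_of_neg_of_neg (by linarith) hvneg
      · exact absurd (by simp [hvdef, heq]) hj
      · have hvpos : 0 < v j := by
          have := (Real.log_lt_log_iff (hy j) (hx j)).mpr hgt
          simp only [hvdef]; linarith
        exact div_pos (by linarith) hvpos
  have hzv : ∀ j, z j * v j = x j - y j := by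
    intro j
    by_cases hj : v j = 0
    · rw [hj, mul_zero, hxyj j hj, sub_self]
    · simp only [hzdef, if_neg hj]
      field_simp
  have hv : v ≠ 0 := by
    obtain ⟨j, hj⟩ := Function.ne_iff.mp hxy
    exact Function.ne_iff.mpr ⟨j, fun hc => hj (hxyj j hc)⟩
  have hlog : ∀ (w : Fin s → ℝ), (∀ j, 0 < w j) → ∀ i,
      Real.log (∏ j, w j ^ Exp j i) = ∑ j, (Exp j i : ℝ) * Real.log (w j) := by
    intro w hw i
    rw [Real.log_prod (fun j _ => zpow_ne_zero _ (ne_of_gt (hw j)))]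
    exact Finset.sum_congr rfl fun j _ => Real.log_zpow _ _
  have htop : ∀ i : Fin (s - d), ∑ j, (Exp j i : ℝ) * v j = 0 := by
    intro i
    have h1 := hlog x hx i
    have h2 := hlog y hy i
    rw [hmon i] at h1
    have h3 : ∑ j, (Exp j i : ℝ) * Real.log (x j) = ∑ j, (Exp j i : ℝ) * Real.log (y j) := by
      rw [← h1, ← h2]
    calc ∑ j, (Exp j i : ℝ) * v j
        = ∑ j, ((Exp j i : ℝ) * Real.log (x j) - (Exp j i : ℝ) * Real.log (y j)) := by
          refine Finset.sum_congr rfl fun j _ => ?_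
          simp only [hvdef]; ring
      _ = 0 := by rw [Finset.sum_sub_distrib, h3, sub_self]
  have hbot : ∀ a : Fin d, ∑ j, W a j * z j * v j = 0 := by
    intro a
    calc ∑ j, W a j * z j * v j
        = ∑ j, (W a j * x j - W a j * y j) := by
          refine Finset.sum_congr rfl fun j _ => ?_
          rw [mul_assoc, hzv j]; ring
      _ = 0 := by rw [Finset.sum_sub_distrib, hlin a, sub_self]
  refine ⟨z, hzpos, ?_⟩
  rw [eval_Bpoly, ← Matrix.exists_mulVec_eq_zero_iff]
  exact ⟨v, hv, (Mmat_mulVec_eq_zero_iff hd Exp W z v).mpr ⟨htop, hbot⟩⟩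

theorem stmt_4 {s d : ℕ} (hd : d ≤ s)
    (Exp : Matrix (Fin s) (Fin (s - d)) ℤ) (W : Matrix (Fin d) (Fin s) ℝ) :
    (∃ x y : Fin s → ℝ, (∀ j, 0 < x j) ∧ (∀ j, 0 < y j) ∧ x ≠ y ∧
      (∀ i : Fin (s - d), (∏ j, x j ^ Exp j i) = ∏ j, y j ^ Exp j i) ∧
      (∀ a : Fin d, (∑ j, W a j * x j) = ∑ j, W a j * y j))
    ↔ (Bpoly hd Exp W = 0 ∨
        ∃ d1 d2 : Fin s →₀ ℕ,
          0 < (Bpoly hd Exp W).coeff d1 ∧ (Bpoly hd Exp W).coeff d2 < 0) := by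
  rw [← zero_point_iff hd Exp W]
  exact ⟨zero_point_of_lhs hd Exp W, lhs_of_zero_point hd Exp W⟩
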